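/- Let g be a polynomial with deg g ≤ 2. Then the Volterra operator V_g f(z) = ∫₀^z f(w)·g'(w) dw is bounded on F^∞_{ψ_m}: there exists C such that ‖V_g f‖_{(m,∞)} ≤ C·‖f‖_{(m,∞)} for all f ∈ F^∞_{ψ_m}. -/

import Mathlib

open MeasureTheory

/-- The weight function ψ_m(z) = |z|²/2 − m·log(1+|z|). -/
noncomputable def psi (m : ℕ) (z : ℂ) : ℝ :=
  ‖z‖ ^ 2 / 2 - m * Real.log (1 + ‖z‖)

/-- Integral of F along the segment from 0 to z. -/
noncomputable def lineInt (F : ℂ → ℂ) (z : ℂ) : ℂ :=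
  (∫ t in (0:ℝ)..1, F (t * z)) * z

/-- The Volterra-type operator V_g f(z) = ∫₀^z f(w) g'(w) dw. -/
noncomputable def Vg (g f : ℂ → ℂ) : ℂ → ℂ :=
  lineInt fun w => f w * deriv g w

lemma deriv_quad (a b c : ℂ) (w : ℂ) :
    deriv (fun w => a * w ^ 2 + b * w + c) w = 2 * a * w + b := by
  have h : HasDerivAt (fun w : ℂ => a * w ^ 2 + b * w + c) (2 * a * w + b) w := by
    have h1 : HasDerivAt (fun w : ℂ => w ^ 2) (2 * w) w := by
      simpa using hasDerivAt_pow 2 w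
    have h2 := ((h1.const_mul a).add ((hasDerivAt_id w).const_mul b)).add_const c
    refine h2.congr_deriv ?_
    ring
  exact h.deriv

lemma log_ineq {r t : ℝ} (hr : 0 ≤ r) (ht0 : 0 ≤ t) (ht1 : t ≤ 1) :
    Real.log (1 + r) ≤ Real.log (1 + t * r) + (1 - t) * r := by
  have htr : (0:ℝ) < 1 + t * r := by nlinarith
  have h1 : (1:ℝ) + r ≤ (1 + t * r) * Real.exp ((1 - t) * r) := by
    calc (1:ℝ) + r ≤ (1 + t * r) * (1 + (1 - t) * r) := by nlinarith [mul_nonneg (mul_nonneg ht0 (sub_nonneg.2 ht1)) (mul_nonneg hr hr)]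
    _ ≤ (1 + t * r) * Real.exp ((1 - t) * r) := by
        gcongr
        linarith [Real.add_one_le_exp ((1 - t) * r)]
  calc Real.log (1 + r) ≤ Real.log ((1 + t * r) * Real.exp ((1 - t) * r)) :=
        Real.log_le_log (by linarith) h1
  _ = Real.log (1 + t * r) + (1 - t) * r := by
        rw [Real.log_mul (ne_of_gt htr) (Real.exp_ne_zero _), Real.log_exp]

lemma psi_diff (m : ℕ) (z : ℂ) {t : ℝ} (ht0 : 0 ≤ t) (ht1 : t ≤ 1) :
    psi m ((t : ℂ) * z) ≤ psi m z + (1 - t) * (m * ‖z‖ - ‖z‖ ^ 2 / 2) := by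
  have habs : ‖(t : ℂ) * z‖ = t * ‖z‖ := by
    rw [norm_mul, Complex.norm_real, Real.norm_of_nonneg ht0]
  set r := ‖z‖ with hr
  have hr0 : 0 ≤ r := norm_nonneg z
  have hlog := log_ineq hr0 ht0 ht1
  have hmlog : (m : ℝ) * Real.log (1 + r) ≤ m * (Real.log (1 + t * r) + (1 - t) * r) :=
    mul_le_mul_of_nonneg_left hlog (Nat.cast_nonneg m)
  simp only [psi, habs]
  have hsq : (t * r) ^ 2 / 2 ≤ r ^ 2 / 2 - (1 - t) * (r ^ 2 / 2) := by
    nlinarith [mul_nonneg (mul_nonneg ht0 (sub_nonneg.2 ht1)) (mul_nonneg hr0 hr0)]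
  nlinarith [hmlog, hsq]

lemma int_exp_le {β : ℝ} (hβ : 0 < β) :
    (∫ t in (0:ℝ)..1, Real.exp (-(1 - t) * β)) ≤ 1 / β := by
  have h : ∀ t ∈ Set.uIcc (0:ℝ) 1,
      HasDerivAt (fun s : ℝ => Real.exp (β * s - β) / β) (Real.exp (-(1 - t) * β)) t := by
    intro t _
    have h1 : HasDerivAt (fun s : ℝ => β * s - β) β t := by
      simpa using ((hasDerivAt_id t).const_mul β).sub_const β
    have h2 := (h1.exp).div_const β
    refine h2.congr_deriv ?_
    rw [mul_div_assoc, div_self (ne_of_gt hβ), mul_one]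
    congr 1
    ring
  have hint : IntervalIntegrable (fun t : ℝ => Real.exp (-(1 - t) * β)) volume 0 1 :=
    (Continuous.intervalIntegrable (by continuity) 0 1)
  rw [intervalIntegral.integral_eq_sub_of_hasDerivAt h hint]
  have := Real.exp_pos (β * 0 - β)
  have : Real.exp (β * 1 - β) = 1 := by norm_num
  rw [this]
  have h3 : 0 < Real.exp (β * 0 - β) / β := by positivity
  linarith

lemma intQ (m : ℕ) (r : ℝ) (hr : 0 ≤ r) :
    r * (1 + r) * (∫ t in (0:ℝ)..1, Real.exp ((1 - t) * (m * r - r ^ 2 / 2)))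
      ≤ (4 * m + 4) * (1 + (4 * m + 4)) * Real.exp ((4 * m + 4) * m) + 8 := by
  set R : ℝ := 4 * m + 4 with hR
  have hR0 : (0:ℝ) < R := by positivity
  have hJ0 : 0 ≤ ∫ t in (0:ℝ)..1, Real.exp ((1 - t) * (m * r - r ^ 2 / 2)) := by
    apply intervalIntegral.integral_nonneg (by norm_num)
    intro t _; exact (Real.exp_pos _).le
  have hcont : ∀ c : ℝ, IntervalIntegrable (fun t : ℝ => Real.exp ((1 - t) * c)) volume 0 1 :=
    fun c => Continuous.intervalIntegrable (by continuity) 0 1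
  by_cases hcase : r ≤ R
  · -- small r
    have hJle : (∫ t in (0:ℝ)..1, Real.exp ((1 - t) * (m * r - r ^ 2 / 2)))
        ≤ Real.exp (R * m) := by
      calc (∫ t in (0:ℝ)..1, Real.exp ((1 - t) * (m * r - r ^ 2 / 2)))
          ≤ ∫ t in (0:ℝ)..1, Real.exp (R * m) := by
            apply intervalIntegral.integral_mono_on (by norm_num) (hcont _)
              (intervalIntegrable_const)
            intro t ht
            apply Real.exp_le_exp.mpr
            rcases ht with ⟨ht0, ht1⟩
            have h1 : (1 - t) * ((m:ℝ) * r - r ^ 2 / 2) ≤ (1 - t) * ((m:ℝ) * r) := by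
              apply mul_le_mul_of_nonneg_left (by nlinarith) (by linarith)
            have h2 : (1 - t) * ((m:ℝ) * r) ≤ (m:ℝ) * r := by
              nlinarith [mul_nonneg (Nat.cast_nonneg m : (0:ℝ) ≤ m) hr]
            have h3 : (m:ℝ) * r ≤ R * m := by nlinarith [Nat.cast_nonneg m (α := ℝ)]
            exact h1.trans (h2.trans h3)
        _ = Real.exp (R * m) := by simp
    calc r * (1 + r) * (∫ t in (0:ℝ)..1, Real.exp ((1 - t) * (m * r - r ^ 2 / 2)))
        ≤ R * (1 + R) * Real.exp (R * m) := by
          apply mul_le_mul (by nlinarith) hJle hJ0 (by positivity)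
      _ ≤ R * (1 + R) * Real.exp (R * m) + 8 := by linarith
  · -- large r
    push_neg at hcase
    have hr4 : (4:ℝ) ≤ r := by
      have : (4:ℝ) ≤ R := by nlinarith [Nat.cast_nonneg m (α := ℝ)]
      linarith
    have hm : (m:ℝ) ≤ r / 4 := by nlinarith [Nat.cast_nonneg m (α := ℝ)]
    have hβ : (0:ℝ) < r ^ 2 / 4 := by positivity
    have hJle : (∫ t in (0:ℝ)..1, Real.exp ((1 - t) * (m * r - r ^ 2 / 2)))
        ≤ 1 / (r ^ 2 / 4) := by
      calc (∫ t in (0:ℝ)..1, Real.exp ((1 - t) * (m * r - r ^ 2 / 2)))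
          ≤ ∫ t in (0:ℝ)..1, Real.exp (-(1 - t) * (r ^ 2 / 4)) := by
            apply intervalIntegral.integral_mono_on (by norm_num) (hcont _)
              (Continuous.intervalIntegrable (by continuity) 0 1)
            intro t ht
            apply Real.exp_le_exp.mpr
            rcases ht with ⟨ht0, ht1⟩
            nlinarith [mul_nonneg (sub_nonneg.2 ht1) hr]
        _ ≤ 1 / (r ^ 2 / 4) := int_exp_le hβ
    calc r * (1 + r) * (∫ t in (0:ℝ)..1, Real.exp ((1 - t) * (m * r - r ^ 2 / 2)))
        ≤ r * (1 + r) * (1 / (r ^ 2 / 4)) := by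
          apply mul_le_mul_of_nonneg_left hJle (by positivity)
      _ = 4 / r + 4 := by field_simp
      _ ≤ 8 := by
          have : 4 / r ≤ 1 := by rw [div_le_one (by linarith)]; linarith
          linarith
      _ ≤ R * (1 + R) * Real.exp (R * m) + 8 := by
          have h9 : 0 ≤ R * (1 + R) * Real.exp (R * m) := by positivity
          linarith

set_option maxHeartbeats 1000000 in
/-- If deg g ≤ 2 then V_g is bounded on F^∞_{ψ_m}. -/
theorem stmt_9 (m : ℕ) (a b c : ℂ) :
    ∃ C > (0 : ℝ), ∀ f : ℂ → ℂ, Differentiable ℂ f → ∀ N : ℝ,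
      (∀ z : ℂ, ‖f z‖ * Real.exp (-psi m z) ≤ N) →
      ∀ z : ℂ, ‖Vg (fun w => a * w ^ 2 + b * w + c) f z‖ *
          Real.exp (-psi m z) ≤ C * N := by
  set K : ℝ := 2 * ‖a‖ + ‖b‖ + 1 with hK
  set C0 : ℝ := (4 * m + 4) * (1 + (4 * m + 4)) * Real.exp ((4 * m + 4) * m) + 8 with hC0
  have hKpos : 0 < K := by positivity
  have hC0pos : 0 < C0 := by positivity
  refine ⟨K * C0 + 1, by positivity, ?_⟩
  intro f hf N hN z
  have hN0 : 0 ≤ N := le_trans (by positivity) (hN 0)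
  set r : ℝ := ‖z‖ with hr
  have hr0 : 0 ≤ r := norm_nonneg z
  -- pointwise bound on the integrand
  have hfb : ∀ w : ℂ, ‖f w‖ ≤ N * Real.exp (psi m w) := by
    intro w
    have h := hN w
    have hpos := Real.exp_pos (psi m w)
    calc ‖f w‖
        = ‖f w‖ * Real.exp (-psi m w) * Real.exp (psi m w) := by
          rw [mul_assoc, ← Real.exp_add]; simp
      _ ≤ N * Real.exp (psi m w) := by
          apply mul_le_mul_of_nonneg_right h hpos.le
  have key : ∀ t : ℝ, t ∈ Set.Icc (0:ℝ) 1 →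
      ‖f ((t : ℂ) * z) * (2 * a * ((t : ℂ) * z) + b)‖
        ≤ N * Real.exp (psi m z) *
          (K * (1 + r) * Real.exp ((1 - t) * (m * r - r ^ 2 / 2))) := by
    intro t ⟨ht0, ht1⟩
    rw [norm_mul]
    have habs : ‖(t : ℂ) * z‖ = t * r := by
      rw [norm_mul, Complex.norm_real, Real.norm_of_nonneg ht0]
    have h1 : ‖f ((t : ℂ) * z)‖ ≤
        N * Real.exp (psi m z) * Real.exp ((1 - t) * (m * r - r ^ 2 / 2)) := by
      calc ‖f ((t : ℂ) * z)‖ ≤ N * Real.exp (psi m ((t : ℂ) * z)) := hfb _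
        _ ≤ N * Real.exp (psi m z + (1 - t) * (m * r - r ^ 2 / 2)) := by
            apply mul_le_mul_of_nonneg_left _ hN0
            exact Real.exp_le_exp.mpr (psi_diff m z ht0 ht1)
        _ = N * Real.exp (psi m z) * Real.exp ((1 - t) * (m * r - r ^ 2 / 2)) := by
            rw [Real.exp_add, mul_assoc]
    have h2 : ‖2 * a * ((t : ℂ) * z) + b‖ ≤ K * (1 + r) := by
      calc ‖2 * a * ((t : ℂ) * z) + b‖
          ≤ ‖2 * a * ((t : ℂ) * z)‖ + ‖b‖ := norm_add_le _ _
        _ = 2 * ‖a‖ * (t * r) + ‖b‖ := by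
            rw [norm_mul, norm_mul, habs]; simp
        _ ≤ K * (1 + r) := by
            rw [hK]
            nlinarith [norm_nonneg a, norm_nonneg b,
              mul_nonneg (norm_nonneg a) hr0]
    calc ‖f ((t : ℂ) * z)‖ * ‖2 * a * ((t : ℂ) * z) + b‖
        ≤ (N * Real.exp (psi m z) * Real.exp ((1 - t) * (m * r - r ^ 2 / 2))) * (K * (1 + r)) := by
          apply mul_le_mul h1 h2 (norm_nonneg _) (by positivity)
      _ = N * Real.exp (psi m z) *
          (K * (1 + r) * Real.exp ((1 - t) * (m * r - r ^ 2 / 2))) := by ring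
  -- integrability
  have hcont1 : Continuous fun t : ℝ => f ((t : ℂ) * z) * (2 * a * ((t : ℂ) * z) + b) := by
    have : Continuous fun t : ℝ => (t : ℂ) * z := by continuity
    exact (hf.continuous.comp this).mul (by continuity)
  -- main estimate
  have hVg : ‖Vg (fun w => a * w ^ 2 + b * w + c) f z‖
      ≤ N * Real.exp (psi m z) * (K * (1 + r)) *
        (∫ t in (0:ℝ)..1, Real.exp ((1 - t) * (m * r - r ^ 2 / 2))) * r := by
    have hVeq : Vg (fun w => a * w ^ 2 + b * w + c) f z
        = (∫ t in (0:ℝ)..1, f ((t : ℂ) * z) * (2 * a * ((t : ℂ) * z) + b)) * z := by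
      simp only [Vg, lineInt, deriv_quad]
    rw [hVeq, norm_mul]
    refine mul_le_mul_of_nonneg_right ?_ hr0
    calc ‖∫ t in (0:ℝ)..1, f ((t : ℂ) * z) * (2 * a * ((t : ℂ) * z) + b)‖
        ≤ ∫ t in (0:ℝ)..1, ‖f ((t : ℂ) * z) * (2 * a * ((t : ℂ) * z) + b)‖ :=
          intervalIntegral.norm_integral_le_integral_norm (by norm_num)
      _ ≤ ∫ t in (0:ℝ)..1, N * Real.exp (psi m z) *
            (K * (1 + r) * Real.exp ((1 - t) * (m * r - r ^ 2 / 2))) := by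
          apply intervalIntegral.integral_mono_on (by norm_num)
            (hcont1.norm.intervalIntegrable 0 1)
            (Continuous.intervalIntegrable (by continuity) 0 1)
          intro t ht
          exact key t ht
      _ = N * Real.exp (psi m z) * (K * (1 + r)) *
            (∫ t in (0:ℝ)..1, Real.exp ((1 - t) * (m * r - r ^ 2 / 2))) := by
          rw [← intervalIntegral.integral_const_mul]
          congr 1; funext t; ring
  have hJ0 : 0 ≤ ∫ t in (0:ℝ)..1, Real.exp ((1 - t) * (m * r - r ^ 2 / 2)) := by
    apply intervalIntegral.integral_nonneg (by norm_num)
    intro t _; exact (Real.exp_pos _).le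
  have hQ := intQ m r hr0
  have hfin : ‖Vg (fun w => a * w ^ 2 + b * w + c) f z‖ * Real.exp (-psi m z)
      ≤ N * K * C0 := by
    have hexp : Real.exp (psi m z) * Real.exp (-psi m z) = 1 := by
      rw [← Real.exp_add]; simp
    calc ‖Vg (fun w => a * w ^ 2 + b * w + c) f z‖ * Real.exp (-psi m z)
        ≤ (N * Real.exp (psi m z) * (K * (1 + r)) *
            (∫ t in (0:ℝ)..1, Real.exp ((1 - t) * (m * r - r ^ 2 / 2))) * r) *
            Real.exp (-psi m z) := by
          apply mul_le_mul_of_nonneg_right hVg (Real.exp_pos _).le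
      _ = N * K * (r * (1 + r) *
            (∫ t in (0:ℝ)..1, Real.exp ((1 - t) * (m * r - r ^ 2 / 2)))) *
            (Real.exp (psi m z) * Real.exp (-psi m z)) := by ring
      _ = N * K * (r * (1 + r) *
            (∫ t in (0:ℝ)..1, Real.exp ((1 - t) * (m * r - r ^ 2 / 2)))) := by
          rw [hexp, mul_one]
      _ ≤ N * K * C0 := by
          apply mul_le_mul_of_nonneg_left hQ (by positivity)
  calc ‖Vg (fun w => a * w ^ 2 + b * w + c) f z‖ * Real.exp (-psi m z)
      ≤ N * K * C0 := hfin
    _ ≤ (K * C0 + 1) * N := by nlinarith [mul_pos hKpos hC0pos]
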